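/- If x : ℝ → ℝ is twice differentiable and satisfies the Leah differential equation x''(t) + sgn(x(t))·|x(t)|^{1/3} = 0 for all t, then the Hamiltonian function t ↦ (x'(t))²/2 + (3/4)·|x(t)|^{4/3} is constant on ℝ. -/

import Mathlib

/-- The odd-power energy term `|u|^(4/3)` is differentiable everywhere with
derivative `sign(u) * |u|^(1/3) * (4/3)`. -/
lemma leah_aux_hasDerivAt (u : ℝ) :
    HasDerivAt (fun v : ℝ => |v| ^ ((4 : ℝ)/3))
      (Real.sign u * |u| ^ ((1 : ℝ)/3) * (4/3)) u := by
  rcases lt_trichotomy u 0 with hu | hu | hu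
  · have h1 : HasDerivAt (fun v : ℝ => (-v) ^ ((4 : ℝ)/3))
        ((4/3) * (-u) ^ ((4 : ℝ)/3 - 1) * (-1)) u := by
      have hout : HasDerivAt (fun w : ℝ => w ^ ((4 : ℝ)/3))
          ((4/3) * (-u) ^ ((4 : ℝ)/3 - 1)) (-u) :=
        Real.hasDerivAt_rpow_const (Or.inl (by linarith))
      exact hout.comp u (hasDerivAt_neg u)
    have hEq : (fun v : ℝ => |v| ^ ((4 : ℝ)/3)) =ᶠ[nhds u]
        (fun v : ℝ => (-v) ^ ((4 : ℝ)/3)) := by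
      filter_upwards [eventually_lt_nhds hu] with v hv
      rw [abs_of_neg hv]
    have h2 := h1.congr_of_eventuallyEq hEq
    convert h2 using 1
    case e'_4 => rfl
    case e'_5 => rfl
    rw [Real.sign_of_neg hu, abs_of_neg hu]
    rw [show ((4 : ℝ)/3 - 1) = (1 : ℝ)/3 by norm_num]
    ring
  · subst hu
    simp only [Real.sign_zero, zero_mul]
    rw [hasDerivAt_iff_tendsto_slope]
    refine squeeze_zero_norm' (a := fun v : ℝ => |v| ^ ((1 : ℝ)/3)) ?_ ?_
    · filter_upwards [self_mem_nhdsWithin] with v (hv : v ≠ 0)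
      have hv0 : 0 < |v| := abs_pos.mpr hv
      have hs : slope (fun v : ℝ => |v| ^ ((4 : ℝ)/3)) 0 v = |v| ^ ((4 : ℝ)/3) / v := by
        rw [slope_def_field]
        rw [show |(0:ℝ)| ^ ((4 : ℝ)/3) = 0 by
          rw [abs_zero, Real.zero_rpow (by norm_num)]]
        ring
      have key : |v| ^ ((4 : ℝ)/3) / |v| = |v| ^ ((1 : ℝ)/3) := by
        rw [show ((1:ℝ)/3) = (4:ℝ)/3 - 1 by norm_num, Real.rpow_sub hv0, Real.rpow_one]
      rw [hs, Real.norm_eq_abs, abs_div,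
        abs_of_nonneg (Real.rpow_nonneg (abs_nonneg v) _), key]
    · have hc : ContinuousAt (fun v : ℝ => |v| ^ ((1 : ℝ)/3)) 0 :=
        (continuous_abs.continuousAt).rpow_const (Or.inr (by norm_num))
      have h0 : |(0:ℝ)| ^ ((1 : ℝ)/3) = (0:ℝ) := by
        rw [abs_zero, Real.zero_rpow (by norm_num)]
      have := hc.tendsto.mono_left (nhdsWithin_le_nhds (s := {(0:ℝ)}ᶜ))
      rwa [h0] at this
  · have h1 : HasDerivAt (fun v : ℝ => v ^ ((4 : ℝ)/3))
        ((4/3) * u ^ ((4 : ℝ)/3 - 1)) u :=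
      Real.hasDerivAt_rpow_const (Or.inl (ne_of_gt hu))
    have hEq : (fun v : ℝ => |v| ^ ((4 : ℝ)/3)) =ᶠ[nhds u]
        (fun v : ℝ => v ^ ((4 : ℝ)/3)) := by
      filter_upwards [eventually_gt_nhds hu] with v hv
      rw [abs_of_pos hv]
    have h2 := h1.congr_of_eventuallyEq hEq
    convert h2 using 1
    case e'_4 => rfl
    case e'_5 => rfl
    rw [Real.sign_of_pos hu, abs_of_pos hu]
    rw [show ((4 : ℝ)/3 - 1) = (1 : ℝ)/3 by norm_num]
    ring

/-- For any twice-differentiable solution of the Leah differential equation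
`x'' + sgn(x)·|x|^(1/3) = 0`, the Hamiltonian
`t ↦ (x'(t))²/2 + (3/4)·|x(t)|^(4/3)` is constant on `ℝ`. -/
theorem leah_hamiltonian_constant (x : ℝ → ℝ)
    (hx : Differentiable ℝ x) (hx' : Differentiable ℝ (deriv x))
    (heq : ∀ t : ℝ, deriv (deriv x) t + Real.sign (x t) * |x t| ^ ((1 : ℝ)/3) = 0) :
    ∃ c : ℝ, ∀ t : ℝ,
      (deriv x t) ^ 2 / 2 + (3/4) * |x t| ^ ((4 : ℝ)/3) = c := by
  set H : ℝ → ℝ := fun t => (deriv x t) ^ 2 / 2 + (3/4) * |x t| ^ ((4 : ℝ)/3) with hH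
  have key : ∀ t : ℝ, HasDerivAt H 0 t := by
    intro t
    have h1 : HasDerivAt (fun s => (deriv x s) ^ 2 / 2)
        ((2 : ℕ) * deriv x t ^ 1 * deriv (deriv x) t / 2) t :=
      (((hx' t).hasDerivAt).pow 2).div_const 2
    have h2 : HasDerivAt (fun s => (3/4 : ℝ) * |x s| ^ ((4 : ℝ)/3))
        ((3/4 : ℝ) * (Real.sign (x t) * |x t| ^ ((1 : ℝ)/3) * (4/3) * deriv x t)) t :=
      ((leah_aux_hasDerivAt (x t)).comp t ((hx t).hasDerivAt)).const_mul (3/4)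
    have h3 := h1.add h2
    convert h3 using 1
    case e'_4 => rfl
    case e'_5 => rfl
    case e'_8 => rfl
    have h4 : deriv (deriv x) t = - (Real.sign (x t) * |x t| ^ ((1 : ℝ)/3)) := by
      have := heq t; linarith
    rw [h4]; push_cast; ring
  refine ⟨H 0, fun t => ?_⟩
  have hc := is_const_of_deriv_eq_zero (f := H)
    (fun t => (key t).differentiableAt) (fun t => (key t).deriv) t 0
  simpa [hH] using hc
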